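/- With m, A in a field k of characteristic ≠ 2, s² = m² - 4, w² = (m+2+A)² - 4(m-2), q₁(x) = x² + ((-A+s-w)/2)x + (m+s)/2 and q₄(x) = x² + ((-A-s-w)/2)x + (m-s)/2, and Q₁ = (m+2+A+w)/2: disc(q₁)·disc(q₄) = (A² - 4(m-2))·Q₁² and Res(q₁, q₄) = (m² - 4)·Q₁. -/

import Mathlib

/-- Discriminant of a monic quadratic `x² + bx + c`. -/
def disc2 {K : Type*} [Field K] (b c : K) : K := b ^ 2 - 4 * c

/-- Resultant of two monic quadratics `x² + b₁x + c₁` and `x² + b₂x + c₂`. -/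
def res2 {K : Type*} [Field K] (b₁ c₁ b₂ c₂ : K) : K :=
  (b₂ - b₁) ^ 2 * c₁ - (b₂ - b₁) * (c₂ - c₁) * b₁ + (c₂ - c₁) ^ 2

/-- with `s² = m² - 4`, `w² = (m+2+A)² - 4(m-2)`,
`q₁(x) = x² + ((-A+s-w)/2)x + (m+s)/2`, `q₄(x) = x² + ((-A-s-w)/2)x + (m-s)/2`,
and `Q₁ = (m+2+A+w)/2`:
`disc(q₁)·disc(q₄) = (A² - 4(m-2))·Q₁²` and `Res(q₁, q₄) = (m² - 4)·Q₁`. -/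
theorem disc_res_q1_q4 {k K : Type*} [Field k] [Field K] [Algebra k K]
    (h2 : (2 : k) ≠ 0) (m A : k)
    (s w : K) (hs : s ^ 2 = algebraMap k K (m ^ 2 - 4))
    (hw : w ^ 2 = algebraMap k K ((m + 2 + A) ^ 2 - 4 * (m - 2))) :
    let M := algebraMap k K m
    let A' := algebraMap k K A
    let Q₁ := (M + 2 + A' + w) / 2
    disc2 ((-A' + s - w) / 2) ((M + s) / 2) * disc2 ((-A' - s - w) / 2) ((M - s) / 2)
        = algebraMap k K (A ^ 2 - 4 * (m - 2)) * Q₁ ^ 2 ∧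
    res2 ((-A' + s - w) / 2) ((M + s) / 2) ((-A' - s - w) / 2) ((M - s) / 2)
        = algebraMap k K (m ^ 2 - 4) * Q₁ := by
  intro M A' Q₁
  have hs' : s ^ 2 = M ^ 2 - 4 := by
    rw [hs]; simp [M, map_sub, map_pow, map_ofNat]
  have hw' : w ^ 2 = (M + 2 + A') ^ 2 - 4 * (M - 2) := by
    rw [hw]; simp [M, A', map_sub, map_mul, map_add, map_pow, map_ofNat]
  have hA : algebraMap k K (A ^ 2 - 4 * (m - 2)) = A' ^ 2 - 4 * (M - 2) := by
    simp [M, A', map_sub, map_mul, map_add, map_pow, map_ofNat]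
  have hM : algebraMap k K (m ^ 2 - 4) = M ^ 2 - 4 := by
    simp [M, map_sub, map_pow, map_ofNat]
  have h2K : (2 : K) ≠ 0 := by
    have hinj := (algebraMap k K).injective
    intro h
    exact h2 (hinj (by rw [map_ofNat, h, map_zero]))
  constructor
  · rw [hA]
    simp only [disc2, Q₁]
    field_simp
    linear_combination (-68 - 32*w - 2*w^2 + s^2 - 32*A' - 4*A'*w - 2*A'^2
        - 16*M + M^2) * hs'
      + (-12 + w^2 + 4*A' + 4*A'*w + 3*A'^2 + 2*M*A' - M^2) * hw'
  · rw [hM]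
    simp only [res2, Q₁]
    field_simp
    have h256 : (2:K)^2*2*(2*2*2)*2^2 ≠ 0 := by
      have h8 := pow_ne_zero 8 h2K
      intro h
      exact h8 (by linear_combination h)
    linear_combination (4*M + 8 + 4*A' + 4*w) * hs'
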